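/- arXiv:1408.1630 — 2 statements merged into one kernel-verified Lean document; each statement's English description precedes it below -/
import Mathlib

section
/- Let H be an n×n complex Hermitian matrix, let λ₁ ≥ ... ≥ λₙ be its eigenvalues arranged in decreasing order, and let μ₁ ≥ ... ≥ μₙ be its (real) diagonal entries arranged in decreasing order. Then μ ≤ λ, i.e. Σ_{j=1}^i μⱼ ≤ Σ_{j=1}^i λⱼ for every i = 1,...,n−1, and Σ_{j=1}^n μⱼ = Σ_{j=1}^n λⱼ (both sums equal the trace of H). -/
open Matrix Finset

lemma key_sum_le {n : ℕ} (c lam : Fin n → ℝ) (σ : Equiv.Perm (Fin n))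
    (hlc : ∀ j, lam j = c (σ j)) (hanti : Antitone lam) (t : Fin n → ℝ)
    (ht0 : ∀ k, 0 ≤ t k) (ht1 : ∀ k, t k ≤ 1) (i : Fin n)
    (hts : ∑ k, t k = (i : ℕ) + 1) :
    ∑ k, t k * c k ≤ ∑ j ∈ Finset.univ.filter (fun j => j ≤ i), lam j := by
  set L := lam i with hL
  set s := Finset.univ.filter (fun j : Fin n => j ≤ i) with hs
  have hsIic : s = Finset.Iic i := by ext j; simp [hs]
  have hcard : s.card = (i : ℕ) + 1 := by rw [hsIic, Fin.card_Iic]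
  have h1 : ∀ k, t k * c k ≤ max (c k - L) 0 + t k * L := by
    intro k
    rcases le_or_gt L (c k) with h | h
    · have : t k * (c k - L) ≤ 1 * (c k - L) :=
        mul_le_mul_of_nonneg_right (ht1 k) (by linarith)
      have hm : max (c k - L) 0 = c k - L := max_eq_left (by linarith)
      nlinarith
    · have : t k * (c k - L) ≤ 0 := mul_nonpos_of_nonneg_of_nonpos (ht0 k) (by linarith)
      have hm : (0:ℝ) ≤ max (c k - L) 0 := le_max_right _ _
      nlinarith
  have h2 : ∑ k, t k * c k ≤ (∑ k, max (c k - L) 0) + (∑ k, t k) * L := by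
    rw [Finset.sum_mul, ← Finset.sum_add_distrib]
    exact Finset.sum_le_sum fun k _ => h1 k
  have h3 : ∑ k, max (c k - L) 0 = ∑ j, max (lam j - L) 0 := by
    rw [← Equiv.sum_comp σ (fun k => max (c k - L) 0)]
    exact Finset.sum_congr rfl fun j _ => by rw [hlc j]
  have h4 : ∑ j, max (lam j - L) 0 = ∑ j ∈ s, (lam j - L) := by
    rw [← Finset.sum_filter_add_sum_filter_not Finset.univ (fun j : Fin n => j ≤ i)]
    have hz : ∑ j ∈ Finset.univ.filter (fun j : Fin n => ¬ j ≤ i), max (lam j - L) 0 = 0 := by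
      apply Finset.sum_eq_zero
      intro j hj
      simp only [Finset.mem_filter] at hj
      have : lam j ≤ L := hanti (le_of_not_ge hj.2)
      simp [max_eq_right, this, sub_nonpos.mpr this]
    rw [hz, add_zero]
    apply Finset.sum_congr rfl
    intro j hj
    simp only [Finset.mem_filter] at hj
    have : L ≤ lam j := hanti hj.2
    simp [max_eq_left, sub_nonneg.mpr this]
  have h5 : ∑ j ∈ s, (lam j - L) = (∑ j ∈ s, lam j) - ((i : ℕ) + 1) * L := by
    rw [Finset.sum_sub_distrib, Finset.sum_const, hcard]
    push_cast; ring
  calc ∑ k, t k * c k ≤ (∑ k, max (c k - L) 0) + (∑ k, t k) * L := h2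
    _ = (∑ j ∈ s, lam j) - ((i : ℕ) + 1) * L + ((i : ℕ) + 1) * L := by
        rw [h3, h4, h5, hts]
    _ = ∑ j ∈ s, lam j := by ring

/-- Schur's theorem: the diagonal of a Hermitian matrix, arranged in decreasing
order, is majorized by the eigenvalues arranged in decreasing order. -/
theorem schur_diagonal_majorized_by_eigenvalues {n : ℕ}
    (H : Matrix (Fin n) (Fin n) ℂ) (hH : H.IsHermitian)
    (lam mu : Fin n → ℝ) (hlam : Antitone lam) (hmu : Antitone mu)
    (hlam_eig : ∃ σ : Equiv.Perm (Fin n), ∀ i, lam i = hH.eigenvalues (σ i))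
    (hmu_diag : ∃ τ : Equiv.Perm (Fin n), ∀ i, mu i = (H (τ i) (τ i)).re) :
    (∀ i : Fin n,
        ∑ j ∈ Finset.univ.filter (fun j => j ≤ i), mu j ≤
          ∑ j ∈ Finset.univ.filter (fun j => j ≤ i), lam j) ∧
      ∑ j, mu j = ∑ j, lam j := by
  obtain ⟨σ, hσ⟩ := hlam_eig
  obtain ⟨τ, hτ⟩ := hmu_diag
  set U : Matrix (Fin n) (Fin n) ℂ := (hH.eigenvectorUnitary : Matrix (Fin n) (Fin n) ℂ) with hU
  set d : Fin n → ℝ := hH.eigenvalues with hd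
  set w : Fin n → Fin n → ℝ := fun j k => Complex.normSq (U j k) with hw
  have hw0 : ∀ j k, 0 ≤ w j k := fun j k => Complex.normSq_nonneg _
  -- diagonal entries
  have hdiag : ∀ j, (H j j).re = ∑ k, w j k * d k := by
    intro j
    have hs := hH.spectral_theorem
    have hjj : H j j = ∑ k, U j k * ((d k : ℝ) : ℂ) * star (U j k) := by
      conv_lhs => rw [hs, Unitary.conjStarAlgAut_apply]
      rw [Matrix.mul_apply]
      simp only [Matrix.mul_diagonal, Matrix.star_apply, Function.comp_apply]
      rfl
    rw [hjj, Complex.re_sum]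
    apply Finset.sum_congr rfl
    intro k _
    rw [mul_comm (U j k), mul_assoc, Complex.star_def, Complex.mul_conj,
      ← Complex.ofReal_mul, Complex.ofReal_re]
    simp [hw, mul_comm]
  -- row sums of w
  have hUmem := hH.eigenvectorUnitary.2
  have hrow : ∀ j, ∑ k, w j k = 1 := by
    intro j
    have h1 : U * star U = 1 := (Matrix.mem_unitaryGroup_iff).mp hUmem
    have := congrFun (congrFun h1 j) j
    rw [Matrix.mul_apply] at this
    simp only [Matrix.star_apply, Matrix.one_apply_eq] at this
    have hre : ∑ i, (U j i * star (U j i)).re = 1 := by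
      have h2 := congrArg Complex.re this
      rwa [Complex.re_sum, Complex.one_re] at h2
    rw [← hre]
    apply Finset.sum_congr rfl
    intro k _
    rw [Complex.star_def, Complex.mul_conj]
    simp [hw]
  have hcol : ∀ k, ∑ j, w j k = 1 := by
    intro k
    have h1 : star U * U = 1 := (Matrix.mem_unitaryGroup_iff').mp hUmem
    have := congrFun (congrFun h1 k) k
    rw [Matrix.mul_apply] at this
    simp only [Matrix.star_apply, Matrix.one_apply_eq] at this
    have hre : ∑ i, (star (U i k) * U i k).re = 1 := by
      have h2 := congrArg Complex.re this
      rwa [Complex.re_sum, Complex.one_re] at h2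
    rw [← hre]
    apply Finset.sum_congr rfl
    intro j _
    rw [mul_comm, Complex.star_def, Complex.mul_conj]
    simp [hw]
  constructor
  · intro i
    set s := Finset.univ.filter (fun j : Fin n => j ≤ i) with hsdef
    set t : Fin n → ℝ := fun k => ∑ j ∈ s, w (τ j) k with ht
    have hsIic : s = Finset.Iic i := by ext j; simp [hsdef]
    have hcard : s.card = (i : ℕ) + 1 := by rw [hsIic, Fin.card_Iic]
    have ht0 : ∀ k, 0 ≤ t k := fun k => Finset.sum_nonneg fun j _ => hw0 _ _
    have ht1 : ∀ k, t k ≤ 1 := by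
      intro k
      have himg : ∑ j ∈ s, w (τ j) k = ∑ j' ∈ s.image τ, w j' k := by
        rw [Finset.sum_image (fun a _ b _ h => τ.injective h)]
      rw [ht]
      simp only
      rw [himg, ← hcol k]
      exact Finset.sum_le_sum_of_subset_of_nonneg (Finset.subset_univ _)
        (fun j _ _ => hw0 j k)
    have hts : ∑ k, t k = (i : ℕ) + 1 := by
      rw [ht]
      simp only
      rw [Finset.sum_comm]
      have : ∀ j ∈ s, ∑ k, w (τ j) k = 1 := fun j _ => hrow (τ j)
      rw [Finset.sum_congr rfl this, Finset.sum_const, hcard]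
      simp
    have hmusum : ∑ j ∈ s, mu j = ∑ k, t k * d k := by
      have : ∀ j ∈ s, mu j = ∑ k, w (τ j) k * d k := fun j _ => by
        rw [hτ j, hdiag]
      rw [Finset.sum_congr rfl this, Finset.sum_comm]
      apply Finset.sum_congr rfl
      intro k _
      rw [ht]
      simp only
      rw [Finset.sum_mul]
    rw [hmusum]
    exact key_sum_le d lam σ hσ hlam t ht0 ht1 i hts
  · have h1 : ∑ j, mu j = ∑ j, (H (τ j) (τ j)).re := Finset.sum_congr rfl fun j _ => hτ j
    have h2 : ∑ j, (H (τ j) (τ j)).re = ∑ j, (H j j).re :=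
      Equiv.sum_comp τ (fun j => (H j j).re)
    have h3 : ∑ j, (H j j).re = ∑ k, d k := by
      rw [Finset.sum_congr rfl fun j (_ : j ∈ Finset.univ) => hdiag j, Finset.sum_comm]
      apply Finset.sum_congr rfl
      intro k _
      rw [← Finset.sum_mul, hcol k, one_mul]
    have h4 : ∑ j, lam j = ∑ k, d k := by
      rw [Finset.sum_congr rfl fun j (_ : j ∈ Finset.univ) => hσ j]
      exact Equiv.sum_comp σ d
    rw [h1, h2, h3, h4]
end

section
/- Every n×n complex symmetric matrix B (Bᵀ = B) admits a decomposition B = U · diag(λ₁,...,λₙ) · Uᵀ, where U is an n×n unitary matrix and λ₁,...,λₙ are complex numbers. -/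
namespace TakagiAux

open Matrix Module

noncomputable section

variable {n : ℕ}

abbrev Eu (n : ℕ) := EuclideanSpace ℂ (Fin n)

def fmap (B : Matrix (Fin n) (Fin n) ℂ) (x : Eu n) : Eu n :=
  WithLp.toLp 2 (B.mulVec (fun i => (starRingEnd ℂ) (x i)))

lemma fmap_apply (B : Matrix (Fin n) (Fin n) ℂ) (x : Eu n) (i : Fin n) :
    fmap B x i = ∑ k, B i k * (starRingEnd ℂ) (x k) := by
  simp [fmap, Matrix.mulVec, dotProduct]

lemma fmap_add (B : Matrix (Fin n) (Fin n) ℂ) (x y : Eu n) :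
    fmap B (x + y) = fmap B x + fmap B y := by
  ext i
  simp [fmap_apply, PiLp.add_apply, mul_add, Finset.sum_add_distrib]

lemma fmap_smul (B : Matrix (Fin n) (Fin n) ℂ) (c : ℂ) (x : Eu n) :
    fmap B (c • x) = (starRingEnd ℂ) c • fmap B x := by
  ext i
  simp [fmap_apply, PiLp.smul_apply, smul_eq_mul, Finset.mul_sum]
  ring_nf
  simp [mul_comm, mul_left_comm]

lemma inner_fmap (B : Matrix (Fin n) (Fin n) ℂ) (hB : Bᵀ = B) (x y : Eu n) :
    inner ℂ (fmap B x) y = (starRingEnd ℂ) (inner ℂ x (fmap B y) : ℂ) := by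
  have hsym : ∀ a b, B a b = B b a := fun a b => (congrFun (congrFun hB a) b).symm
  simp only [PiLp.inner_apply, RCLike.inner_apply, fmap_apply, map_sum, _root_.map_mul,
    starRingEnd_self_apply, Finset.sum_mul, Finset.mul_sum]
  rw [Finset.sum_comm]
  refine Finset.sum_congr rfl fun k _ => Finset.sum_congr rfl fun i _ => ?_
  rw [hsym i k]
  ring

def Tmap (B : Matrix (Fin n) (Fin n) ℂ) : Eu n →ₗ[ℂ] Eu n where
  toFun x := fmap B (fmap B x)
  map_add' x y := by
    show fmap B (fmap B (x + y)) = fmap B (fmap B x) + fmap B (fmap B y)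
    rw [fmap_add, fmap_add]
  map_smul' c x := by
    show fmap B (fmap B (c • x)) = (RingHom.id ℂ) c • fmap B (fmap B x)
    rw [fmap_smul, fmap_smul]; simp

lemma exists_coneigen (B : Matrix (Fin n) (Fin n) ℂ) (hB : Bᵀ = B)
    (V : Submodule ℂ (Eu n)) (hV : ∀ x ∈ V, fmap B x ∈ V) (hVne : V ≠ ⊥) :
    ∃ v, v ∈ V ∧ ‖v‖ = 1 ∧ ∃ s : ℝ, fmap B v = (s : ℂ) • v := by
  have hTV : ∀ x ∈ V, Tmap B x ∈ V := fun x hx => hV _ (hV _ hx)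
  haveI : Nontrivial V := Submodule.nontrivial_iff_ne_bot.mpr hVne
  obtain ⟨t, ht⟩ := Module.End.exists_eigenvalue ((Tmap B).restrict hTV)
  obtain ⟨w, hw⟩ := ht.exists_hasEigenvector
  have hw0 : (w : Eu n) ≠ 0 := fun h => hw.right (Subtype.coe_injective h)
  have hTw : fmap B (fmap B (w : Eu n)) = t • (w : Eu n) := by
    have h := hw.apply_eq_smul
    have h2 := congrArg (Subtype.val) h
    rw [LinearMap.restrict_coe_apply] at h2
    exact h2
  have key : t * (‖(w : Eu n)‖ : ℂ) ^ 2 = (‖fmap B (w : Eu n)‖ : ℂ) ^ 2 := by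
    have h1 : (inner ℂ ((w : Eu n)) (fmap B (fmap B (w : Eu n))) : ℂ)
        = (starRingEnd ℂ) (inner ℂ (fmap B (w : Eu n)) (fmap B (w : Eu n)) : ℂ) := by
      rw [inner_fmap B hB]
      exact (Complex.conj_conj _).symm
    rw [hTw, inner_smul_right, inner_self_eq_norm_sq_to_K,
      inner_self_eq_norm_sq_to_K] at h1
    simpa using h1
  set r : ℝ := (‖fmap B (w : Eu n)‖ / ‖(w : Eu n)‖) ^ 2 with hr
  have hrt : t = (r : ℂ) := by
    have hnw : (‖(w : Eu n)‖ : ℂ) ≠ 0 := by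
      simpa using hw0
    push_cast [hr]
    field_simp
    linear_combination key
  have hr0 : 0 ≤ r := sq_nonneg _
  set s : ℝ := Real.sqrt r with hs
  have hs2 : (s : ℂ) * (s : ℂ) = (r : ℂ) := by
    rw [hs, ← Complex.ofReal_mul, Real.mul_self_sqrt hr0]
  set v1 : Eu n := fmap B (w : Eu n) + (s : ℂ) • (w : Eu n) with hv1def
  have hfv1 : fmap B v1 = (s : ℂ) • v1 := by
    rw [hv1def, fmap_add, fmap_smul, hTw, hrt, smul_add, smul_smul, hs2, Complex.conj_ofReal,
      add_comm]
  by_cases hv1 : v1 = 0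
  · have hfw : fmap B (w : Eu n) = ((-s : ℝ) : ℂ) • (w : Eu n) := by
      have : fmap B (w : Eu n) = -((s : ℂ) • (w : Eu n)) := by
        rw [eq_neg_iff_add_eq_zero]
        exact hv1
      rw [this]
      push_cast
      rw [neg_smul]
    refine ⟨(‖(w : Eu n)‖⁻¹ : ℂ) • (w : Eu n), V.smul_mem _ w.2,
      norm_smul_inv_norm (𝕜 := ℂ) hw0, -s, ?_⟩
    rw [fmap_smul, hfw, map_inv₀, Complex.conj_ofReal]
    push_cast
    rw [smul_comm]
  · have hv1V : v1 ∈ V := V.add_mem (hV _ w.2) (V.smul_mem _ w.2)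
    refine ⟨(‖v1‖⁻¹ : ℂ) • v1, V.smul_mem _ hv1V,
      norm_smul_inv_norm (𝕜 := ℂ) hv1, s, ?_⟩
    rw [fmap_smul, hfv1, map_inv₀, Complex.conj_ofReal, smul_comm]

lemma takagi_aux (B : Matrix (Fin n) (Fin n) ℂ) (hB : Bᵀ = B) :
    ∀ (k : ℕ) (V : Submodule ℂ (Eu n)), Module.finrank ℂ V = k →
      (∀ x ∈ V, fmap B x ∈ V) →
      ∃ v : Fin k → Eu n, Orthonormal ℂ v ∧ (∀ j, v j ∈ V) ∧
        ∃ μ : Fin k → ℝ, ∀ j, fmap B (v j) = ((μ j : ℝ) : ℂ) • v j := by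
  intro k
  induction k with
  | zero =>
    intro V _ _
    exact ⟨fun i => i.elim0, orthonormal_iff_ite.mpr fun i => i.elim0,
      fun j => j.elim0, fun i => i.elim0, fun j => j.elim0⟩
  | succ k ih =>
    intro V hVr hV
    have hVne : V ≠ ⊥ := by
      intro h
      rw [h, finrank_bot] at hVr
      exact (Nat.succ_ne_zero k) hVr.symm
    obtain ⟨u, huV, hu1, s, hus⟩ := exists_coneigen B hB V hV hVne
    have hu0 : u ≠ 0 := by
      intro h
      rw [h, norm_zero] at hu1
      exact one_ne_zero hu1.symm
    set V' : Submodule ℂ (Eu n) := (ℂ ∙ u)ᗮ ⊓ V with hV'def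
    have hV'inv : ∀ x ∈ V', fmap B x ∈ V' := by
      intro x hx
      obtain ⟨hx1, hx2⟩ := Submodule.mem_inf.mp hx
      rw [Submodule.mem_orthogonal_singleton_iff_inner_right] at hx1
      refine Submodule.mem_inf.mpr ⟨?_, hV x hx2⟩
      rw [Submodule.mem_orthogonal_singleton_iff_inner_right]
      have h := inner_fmap B hB u x
      rw [hus, inner_smul_left, hx1, mul_zero] at h
      simpa using congrArg (starRingEnd ℂ) h.symm
    have hle : (ℂ ∙ u) ≤ V := by rwa [Submodule.span_singleton_le_iff_mem]
    have hrank : Module.finrank ℂ V' = k := by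
      have h := Submodule.finrank_add_inf_finrank_orthogonal hle
      rw [finrank_span_singleton hu0, hVr] at h
      rw [hV'def]
      omega
    obtain ⟨v, hvon, hvV', μ, hvμ⟩ := ih V' hrank hV'inv
    have hvu : ∀ j, (inner ℂ u (v j) : ℂ) = 0 := fun j =>
      Submodule.mem_orthogonal_singleton_iff_inner_right.mp
        (Submodule.mem_inf.mp (hvV' j)).1
    have hvu' : ∀ j, (inner ℂ (v j) u : ℂ) = 0 := fun j =>
      inner_eq_zero_symm.mp (hvu j)
    refine ⟨Fin.cons u v, ?_, ?_, Fin.cons s μ, ?_⟩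
    · rw [orthonormal_iff_ite]
      intro i
      refine Fin.cases ?_ ?_ i
      · intro j
        refine Fin.cases ?_ ?_ j
        · simp [inner_self_eq_norm_sq_to_K, hu1]
        · intro j'
          simp [hvu j', (Fin.succ_ne_zero j').symm]
      · intro i' j
        refine Fin.cases ?_ ?_ j
        · simp [hvu' i', Fin.succ_ne_zero]
        · intro j'
          have := orthonormal_iff_ite.mp hvon i' j'
          simpa [Fin.succ_inj] using this
    · intro j
      refine Fin.cases ?_ ?_ j
      · simpa using huV
      · intro j'
        simpa using (Submodule.mem_inf.mp (hvV' j')).2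
    · intro j
      refine Fin.cases ?_ ?_ j
      · simpa using hus
      · intro j'
        simpa using hvμ j'

theorem takagi_main {n : ℕ}
    (B : Matrix (Fin n) (Fin n) ℂ) (hB : Bᵀ = B) :
    ∃ (U : Matrix (Fin n) (Fin n) ℂ) (d : Fin n → ℂ),
      U ∈ Matrix.unitaryGroup (Fin n) ℂ ∧ B = U * Matrix.diagonal d * Uᵀ := by
  obtain ⟨v, hvon, -, μ, hvμ⟩ := takagi_aux B hB n ⊤
    (by simp [finrank_top]) (fun x _ => Submodule.mem_top)
  set U : Matrix (Fin n) (Fin n) ℂ := Matrix.of fun i j => v j i with hU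
  have hUU : star U * U = 1 := by
    ext i j
    have h := orthonormal_iff_ite.mp hvon i j
    rw [PiLp.inner_apply] at h
    simp only [RCLike.inner_apply] at h
    simp only [Matrix.mul_apply, Matrix.star_apply, Matrix.one_apply, hU, Matrix.of_apply]
    refine Eq.trans ?_ h
    exact Finset.sum_congr rfl fun k _ => mul_comm _ _
  have hUc : U * star U = 1 := mul_eq_one_comm.mp hUU
  refine ⟨U, fun j => ((μ j : ℝ) : ℂ), Matrix.mem_unitaryGroup_iff'.mpr hUU, ?_⟩
  have key : B * (star U)ᵀ = U * Matrix.diagonal (fun j => ((μ j : ℝ) : ℂ)) := by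
    ext i j
    rw [Matrix.mul_apply, Matrix.mul_diagonal]
    have h : fmap B (v j) i = (((μ j : ℝ) : ℂ) • v j) i := by rw [hvμ j]
    rw [fmap_apply] at h
    simp only [PiLp.smul_apply, smul_eq_mul] at h
    simp only [Matrix.transpose_apply, Matrix.star_apply, hU, Matrix.of_apply, RCLike.star_def]
    rw [h, mul_comm]
  calc B = B * ((star U)ᵀ * Uᵀ) := by
        rw [← Matrix.transpose_mul, hUc, Matrix.transpose_one, Matrix.mul_one]
    _ = B * (star U)ᵀ * Uᵀ := by rw [Matrix.mul_assoc]
    _ = U * Matrix.diagonal (fun j => ((μ j : ℝ) : ℂ)) * Uᵀ := by rw [key]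

end

end TakagiAux

open Matrix

/-- Autonne–Takagi decomposition: every complex symmetric matrix `B` can be
written as `B = U * diag(λ) * Uᵀ` with `U` unitary. -/
theorem takagi_decomposition {n : ℕ}
    (B : Matrix (Fin n) (Fin n) ℂ) (hB : Bᵀ = B) :
    ∃ (U : Matrix (Fin n) (Fin n) ℂ) (d : Fin n → ℂ),
      U ∈ Matrix.unitaryGroup (Fin n) ℂ ∧ B = U * Matrix.diagonal d * Uᵀ :=
  TakagiAux.takagi_main B hB
end
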